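/- Let π be a deterministic Markov policy of an MMDP and let π' be constructed by the backward sweep of the CADP algorithm: for t = T, T−1, …, 1 and each state s, π'_t(s) is chosen in argmax_{a∈A} Σ_{m∈M} b^π_{t,m}(s) · q_{t,m}(s,a), where b^π_{t,m} are the model weights induced by the old policy π and q_{t,m} is the state–action value function computed using the already-updated decision rules π'_{t+1},…,π'_T for steps after t. Then ρ(π') ≥ ρ(π). -/

import Mathlib

set_option autoImplicit false

open Finset

noncomputable section

/-- Value function of a deterministic Markov policy in one model of an MMDP, computed with
`n` remaining steps; `mmdpVDAux T p r pol n` corresponds to the value at time `T + 1 - n`. -/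
def mmdpVDAux {S A : Type*} [Fintype S] (T : ℕ)
    (p : S → A → S → ℝ) (r : ℕ → S → A → ℝ) (pol : ℕ → S → A) : ℕ → S → ℝ
  | 0 => fun _ => 0
  | n + 1 => fun s =>
      r (T - n) s (pol (T - n) s) +
        ∑ s' : S, p s (pol (T - n) s) s' * mmdpVDAux T p r pol n s'

/-- The value function `v^π_{t,m}` of a deterministic Markov policy. -/
def mmdpVD {S A : Type*} [Fintype S] (T : ℕ)
    (p : S → A → S → ℝ) (r : ℕ → S → A → ℝ) (pol : ℕ → S → A) (t : ℕ) : S → ℝ :=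
  mmdpVDAux T p r pol (T + 1 - t)

/-- The state-action value function `q^π_{t,m}`; it depends only on the decision rules of
`pol` at the time steps `t+1, …, T`. -/
def mmdpQD {S A : Type*} [Fintype S] (T : ℕ)
    (p : S → A → S → ℝ) (r : ℕ → S → A → ℝ) (pol : ℕ → S → A) (t : ℕ) (s : S) (a : A) : ℝ :=
  r t s a + ∑ s' : S, p s a s' * mmdpVD T p r pol (t + 1) s'

/-- Forward recursion for the model weights of one model, with initial weight `w0`;
the argument is `t - 1`, so `mmdpBDAux p pol w0 0 = w0` is the weight at time `1`. -/
def mmdpBDAux {S A : Type*} [Fintype S]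
    (p : S → A → S → ℝ) (pol : ℕ → S → A) (w0 : S → ℝ) : ℕ → S → ℝ
  | 0 => w0
  | k + 1 => fun s' => ∑ s : S, p s (pol (k + 1) s) s' * mmdpBDAux p pol w0 k s

/-- The model weight `b^π_{t,m}(s)` of a deterministic Markov policy, with initial weight
`w0 = λ_m · μ`. -/
def mmdpBD {S A : Type*} [Fintype S]
    (p : S → A → S → ℝ) (pol : ℕ → S → A) (w0 : S → ℝ) (t : ℕ) : S → ℝ :=
  mmdpBDAux p pol w0 (t - 1)

/-- The MMDP return `ρ(π) = Σ_m Σ_s b^π_{1,m}(s) · v^π_{1,m}(s)` with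
`b^π_{1,m}(s) = λ_m · μ(s)`. -/
def mmdpRetD {S A M : Type*} [Fintype S] [Fintype M] (T : ℕ)
    (p : M → S → A → S → ℝ) (r : M → ℕ → S → A → ℝ) (μ : S → ℝ) (lam : M → ℝ)
    (pol : ℕ → S → A) : ℝ :=
  ∑ m : M, ∑ s : S, lam m * μ s * mmdpVD T (p m) (r m) pol 1 s

lemma mmdpVD_eq_qD {S A : Type*} [Fintype S] (T : ℕ)
    (p : S → A → S → ℝ) (r : ℕ → S → A → ℝ) (pol : ℕ → S → A) {t : ℕ} (ht : t ≤ T) (s : S) :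
    mmdpVD T p r pol t s = mmdpQD T p r pol t s (pol t s) := by
  simp only [mmdpQD, mmdpVD]
  rw [show T + 1 - t = (T - t) + 1 by omega, show T + 1 - (t + 1) = T - t by omega]
  simp only [mmdpVDAux, Nat.sub_sub_self ht]

lemma mmdpVD_top {S A : Type*} [Fintype S] (T : ℕ)
    (p : S → A → S → ℝ) (r : ℕ → S → A → ℝ) (pol : ℕ → S → A) (s : S) :
    mmdpVD T p r pol (T + 1) s = 0 := by
  simp only [mmdpVD, Nat.sub_self, mmdpVDAux]

lemma mmdpBD_succ {S A : Type*} [Fintype S]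
    (p : S → A → S → ℝ) (pol : ℕ → S → A) (w0 : S → ℝ) {t : ℕ} (ht : 1 ≤ t) (s' : S) :
    mmdpBD p pol w0 (t + 1) s' = ∑ s : S, p s (pol t s) s' * mmdpBD p pol w0 t s := by
  obtain ⟨k, rfl⟩ : ∃ k, t = k + 1 := ⟨t - 1, by omega⟩
  simp only [mmdpBD, Nat.add_sub_cancel, mmdpBDAux]

lemma sum_bD_mul_sum_p {S A : Type*} [Fintype S]
    (p : S → A → S → ℝ) (pol : ℕ → S → A) (w0 : S → ℝ) {t : ℕ} (ht : 1 ≤ t) (f : S → ℝ) :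
    ∑ s : S, mmdpBD p pol w0 t s * ∑ s' : S, p s (pol t s) s' * f s'
      = ∑ s' : S, mmdpBD p pol w0 (t + 1) s' * f s' := by
  have : ∀ s' : S, mmdpBD p pol w0 (t + 1) s' * f s'
      = ∑ s : S, p s (pol t s) s' * mmdpBD p pol w0 t s * f s' := by
    intro s'; rw [mmdpBD_succ p pol w0 ht, Finset.sum_mul]
  simp only [this, Finset.mul_sum]
  rw [Finset.sum_comm]
  exact Finset.sum_congr rfl fun s _ => Finset.sum_congr rfl fun s' _ => by ring

/-- CADP policy improvement: if `pol'` is obtained from `pol` by the backward sweep of CADP,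
i.e., at every time step `t` and state `s` the action `pol' t s` maximizes
`Σ_m b^{pol}_{t,m}(s) · q^{pol'}_{t,m}(s,a)` over `a` (with the model weights induced by the
old policy `pol` and the state–action values computed with the already-updated decision rules
of `pol'` after step `t`), then `ρ(pol') ≥ ρ(pol)`. -/
theorem cadp_policy_improvement {S A M : Type*} [Fintype S] [Fintype A] [Fintype M] (T : ℕ)
    (p : M → S → A → S → ℝ) (r : M → ℕ → S → A → ℝ) (μ : S → ℝ) (lam : M → ℝ)
    (hp0 : ∀ m s a s', 0 ≤ p m s a s') (hp1 : ∀ m s a, ∑ s' : S, p m s a s' = 1)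
    (hμ0 : ∀ s, 0 ≤ μ s) (hμ1 : ∑ s : S, μ s = 1)
    (hlam0 : ∀ m, 0 ≤ lam m) (hlam1 : ∑ m : M, lam m = 1)
    (pol pol' : ℕ → S → A)
    (himp : ∀ t : ℕ, 1 ≤ t → t ≤ T → ∀ s : S, ∀ a : A,
      ∑ m : M, mmdpBD (p m) pol (fun s0 => lam m * μ s0) t s * mmdpQD T (p m) (r m) pol' t s a
        ≤ ∑ m : M, mmdpBD (p m) pol (fun s0 => lam m * μ s0) t s *
            mmdpQD T (p m) (r m) pol' t s (pol' t s)) :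
    mmdpRetD T p r μ lam pol ≤ mmdpRetD T p r μ lam pol' := by
  set B : M → ℕ → S → ℝ := fun m t => mmdpBD (p m) pol (fun s0 => lam m * μ s0) t with hB
  have key : ∀ k : ℕ, k ≤ T →
      ∑ m : M, ∑ s : S, B m (T + 1 - k) s * mmdpVD T (p m) (r m) pol (T + 1 - k) s
        ≤ ∑ m : M, ∑ s : S, B m (T + 1 - k) s * mmdpVD T (p m) (r m) pol' (T + 1 - k) s := by
    intro k
    induction k with
    | zero =>
      intro _
      simp [Nat.sub_zero, mmdpVD_top]
    | succ k ih =>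
      intro hk
      have ht1 : 1 ≤ T + 1 - (k + 1) := by omega
      have htT : T + 1 - (k + 1) ≤ T := by omega
      set t := T + 1 - (k + 1) with hT
      have htk : T + 1 - k = t + 1 := by omega
      have ihs := ih (by omega)
      rw [htk] at ihs
      have expand : ∀ m (q : ℕ → S → A),
          ∑ s : S, B m t s * mmdpQD T (p m) (r m) q t s (pol t s)
            = (∑ s : S, B m t s * r m t s (pol t s))
              + ∑ s' : S, B m (t + 1) s' * mmdpVD T (p m) (r m) q (t + 1) s' := by
        intro m q
        rw [← sum_bD_mul_sum_p (p m) pol (fun s0 => lam m * μ s0) ht1]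
        simp only [mmdpQD, mul_add, Finset.sum_add_distrib, hB]
      calc ∑ m : M, ∑ s : S, B m t s * mmdpVD T (p m) (r m) pol t s
          = ∑ m : M, ∑ s : S, B m t s * mmdpQD T (p m) (r m) pol t s (pol t s) := by
            simp only [mmdpVD_eq_qD T (p _) (r _) pol htT]
        _ ≤ ∑ m : M, ∑ s : S, B m t s * mmdpQD T (p m) (r m) pol' t s (pol t s) := by
            simp only [expand, Finset.sum_add_distrib]
            exact add_le_add le_rfl ihs
        _ ≤ ∑ m : M, ∑ s : S, B m t s * mmdpQD T (p m) (r m) pol' t s (pol' t s) := by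
            rw [Finset.sum_comm,
              Finset.sum_comm (f := fun (m : M) (s : S) =>
                B m t s * mmdpQD T (p m) (r m) pol' t s (pol' t s))]
            exact Finset.sum_le_sum fun s _ => himp t ht1 htT s (pol t s)
        _ = ∑ m : M, ∑ s : S, B m t s * mmdpVD T (p m) (r m) pol' t s := by
            simp only [mmdpVD_eq_qD T (p _) (r _) pol' htT]
  have h := key T le_rfl
  rw [show T + 1 - T = 1 by omega] at h
  simpa only [mmdpRetD, hB, mmdpBD, Nat.sub_self, mmdpBDAux] using h
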